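/- arXiv:2011.05886 — 2 statements merged into one kernel-verified Lean document; each statement's English description precedes it below -/
import Mathlib

section
/- The operators M = Σ_{i=1}^N θ̂_i (left multiplication by θ_i summed over i) and D = Σ_{i=1}^N t^{i-1} ∂_i commute with T_j for all 1 ≤ j < N. -/
open Finset

noncomputable section

/-- The space of "fermionic" polynomials: formal linear combinations of
monomials `φ_E = θ_{i₁}⋯θ_{i_m}` indexed by finite sets `E` of indices. -/
abbrev SP (K : Type) [Field K] := Finset ℕ →₀ K

variable {K : Type} [Field K]

/-- basis monomial φ_E -/
def phi (K : Type) [Field K] (E : Finset ℕ) : SP K := Finsupp.single E 1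

/-- linear operator determined by its values on the basis {φ_E} -/
def opOf (v : Finset ℕ → SP K) : SP K →ₗ[K] SP K :=
  Finsupp.lsum K fun E => LinearMap.toSpanSingleton K (SP K) (v E)

/-- the image s_i E of E under the transposition swapping i, i+1 -/
def swapSet (i : ℕ) (E : Finset ℕ) : Finset ℕ := E.image (Equiv.swap i (i + 1))

/-- the Hecke algebra operator T_i acting on anti-commuting variables -/
def heckeT (t : K) (i : ℕ) : SP K →ₗ[K] SP K :=
  opOf fun E =>
    if i ∈ E then
      (if i + 1 ∈ E then -phi K E else phi K (swapSet i E))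
    else
      (if i + 1 ∈ E then (t - 1) • phi K E + t • phi K (swapSet i E)
       else t • phi K E)

/-- signed exterior multiplication θ̂_i -/
def thetaHat (K : Type) [Field K] (i : ℕ) : SP K →ₗ[K] SP K :=
  opOf fun E =>
    if i ∈ E then 0
    else ((-1 : K) ^ (E.filter (· < i)).card) • phi K (insert i E)

/-- formal fermionic derivative ∂_i -/
def fermD (K : Type) [Field K] (i : ℕ) : SP K →ₗ[K] SP K :=
  opOf fun E =>
    if i ∈ E then ((-1 : K) ^ (E.filter (· < i)).card) • phi K (E.erase i)
    else 0

/-- M = Σ_{i=1}^N θ̂_i -/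
def opM (K : Type) [Field K] (N : ℕ) : SP K →ₗ[K] SP K :=
  ∑ i ∈ Finset.Icc 1 N, thetaHat K i

/-- D = Σ_{i=1}^N t^{i-1} ∂_i -/
def opD (t : K) (N : ℕ) : SP K →ₗ[K] SP K :=
  ∑ i ∈ Finset.Icc 1 N, t ^ (i - 1) • fermD K i

lemma opOf_phi (v : Finset ℕ → SP K) (E : Finset ℕ) : opOf v (phi K E) = v E := by
  simp [opOf, phi]
lemma ext_phi {f g : SP K →ₗ[K] SP K} (h : ∀ E, f (phi K E) = g (phi K E)) : f = g := by
  refine Finsupp.lhom_ext fun a b => ?_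
  have hb : (Finsupp.single a b : SP K) = b • phi K a := by
    simp [phi, Finsupp.smul_single]
  rw [hb, map_smul, map_smul, h]
lemma mem_swapSet {j k : ℕ} {E : Finset ℕ} :
    k ∈ swapSet j E ↔ Equiv.swap j (j+1) k ∈ E := by
  simp only [swapSet, Finset.mem_image]
  constructor
  · rintro ⟨x, hx, rfl⟩; simpa using hx
  · intro h; exact ⟨_, h, Equiv.swap_apply_self _ _ _⟩
lemma mem_swapSet_of_ne {i j : ℕ} {E : Finset ℕ} (h1 : i ≠ j) (h2 : i ≠ j+1) :
    i ∈ swapSet j E ↔ i ∈ E := by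
  rw [mem_swapSet, Equiv.swap_apply_of_ne_of_ne h1 h2]
lemma left_mem_swapSet {j : ℕ} {E : Finset ℕ} : j ∈ swapSet j E ↔ j+1 ∈ E := by
  rw [mem_swapSet, Equiv.swap_apply_left]
lemma right_mem_swapSet {j : ℕ} {E : Finset ℕ} : j+1 ∈ swapSet j E ↔ j ∈ E := by
  rw [mem_swapSet, Equiv.swap_apply_right]
lemma swapSet_insert (j k : ℕ) (E : Finset ℕ) :
    swapSet j (insert k E) = insert (Equiv.swap j (j+1) k) (swapSet j E) :=
  Finset.image_insert _ _ _
lemma swapSet_erase (j k : ℕ) (E : Finset ℕ) :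
    swapSet j (E.erase k) = (swapSet j E).erase (Equiv.swap j (j+1) k) :=
  Finset.image_erase (Equiv.injective _) _ _
lemma swapSet_eq_self {j : ℕ} {E : Finset ℕ} (h : j ∈ E ↔ j+1 ∈ E) :
    swapSet j E = E := by
  ext k
  rw [mem_swapSet]
  rcases eq_or_ne k j with rfl | hk
  · rw [Equiv.swap_apply_left]; exact h.symm
  rcases eq_or_ne k (j+1) with rfl | hk'
  · rw [Equiv.swap_apply_right]; exact h
  · rw [Equiv.swap_apply_of_ne_of_ne hk hk']
lemma c_swap {i j : ℕ} (hij : i ≠ j + 1) (E : Finset ℕ) :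
    ((swapSet j E).filter (· < i)).card = (E.filter (· < i)).card := by
  rw [swapSet, Finset.filter_image,
    Finset.card_image_of_injective _ (Equiv.injective _)]
  congr 1
  refine Finset.filter_congr fun x _ => ?_
  rcases eq_or_ne x j with rfl | hx
  · rw [Equiv.swap_apply_left]; omega
  rcases eq_or_ne x (j+1) with rfl | hx'
  · rw [Equiv.swap_apply_right]; omega
  · rw [Equiv.swap_apply_of_ne_of_ne hx hx']
lemma c_succ_of_not_mem {j : ℕ} {E : Finset ℕ} (hj : j ∉ E) :
    (E.filter (· < j+1)).card = (E.filter (· < j)).card := by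
  congr 1
  refine Finset.filter_congr fun x hx => ?_
  have : x ≠ j := fun h => hj (h ▸ hx)
  omega
lemma c_succ_of_mem {j : ℕ} {E : Finset ℕ} (hj : j ∈ E) :
    (E.filter (· < j+1)).card = (E.filter (· < j)).card + 1 := by
  have : E.filter (· < j+1) = insert j (E.filter (· < j)) := by
    ext x
    simp only [Finset.mem_filter, Finset.mem_insert]
    constructor
    · rintro ⟨hxE, hx⟩
      rcases eq_or_ne x j with rfl | hxj
      · exact Or.inl rfl
      · exact Or.inr ⟨hxE, by omega⟩
    · rintro (rfl | ⟨hxE, hx⟩)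
      · exact ⟨hj, by omega⟩
      · exact ⟨hxE, by omega⟩
  rw [this, Finset.card_insert_of_notMem (by simp)]
lemma c_le_of_not_mem {j : ℕ} {E : Finset ℕ} (hj : j ∉ E) :
    (E.filter (· ≤ j)).card = (E.filter (· < j)).card := by
  simpa using c_succ_of_not_mem hj
lemma c_le_of_mem {j : ℕ} {E : Finset ℕ} (hj : j ∈ E) :
    (E.filter (· ≤ j)).card = (E.filter (· < j)).card + 1 := by
  simpa using c_succ_of_mem hj

-- Lemma A for thetaHat
lemma theta_comm (t : K) {i j : ℕ} (hij1 : i ≠ j) (hij2 : i ≠ j+1) :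
    thetaHat K i ∘ₗ heckeT t j = heckeT t j ∘ₗ thetaHat K i := by
  apply ext_phi; intro E
  have hswap : Equiv.swap j (j+1) i = i := Equiv.swap_apply_of_ne_of_ne hij1 hij2
  by_cases hj : j ∈ E <;> by_cases hj' : j + 1 ∈ E <;> by_cases hi : i ∈ E <;>
    simp [heckeT, thetaHat, opOf_phi, hj, hj', hi,
      mem_swapSet_of_ne hij1 hij2, swapSet_insert, hswap, c_swap hij2,
      Finset.mem_insert, hij1.symm, hij2.symm, smul_smul, mul_comm]

-- Lemma A for fermD
lemma ferm_comm (t : K) {i j : ℕ} (hij1 : i ≠ j) (hij2 : i ≠ j+1) :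
    fermD K i ∘ₗ heckeT t j = heckeT t j ∘ₗ fermD K i := by
  apply ext_phi; intro E
  have hswap : Equiv.swap j (j+1) i = i := Equiv.swap_apply_of_ne_of_ne hij1 hij2
  by_cases hj : j ∈ E <;> by_cases hj' : j + 1 ∈ E <;> by_cases hi : i ∈ E <;>
    simp [heckeT, fermD, opOf_phi, hj, hj', hi,
      mem_swapSet_of_ne hij1 hij2, swapSet_erase, hswap, c_swap hij2,
      Finset.mem_erase, hij1.symm, hij2.symm, smul_smul, mul_comm]

-- Lemma B: the pair θ̂_j + θ̂_{j+1}
lemma pair_theta_comm (t : K) (j : ℕ) :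
    (thetaHat K j + thetaHat K (j+1)) ∘ₗ heckeT t j
      = heckeT t j ∘ₗ (thetaHat K j + thetaHat K (j+1)) := by
  apply ext_phi; intro E
  have hjne : j ≠ j + 1 := by omega
  by_cases hj : j ∈ E <;> by_cases hj' : j + 1 ∈ E
  · simp [heckeT, thetaHat, opOf_phi, hj, hj']
  · -- j ∈ E, j+1 ∉ E
    have hset : insert j (swapSet j E) = insert (j+1) E := by
      rw [show insert (j+1) E = swapSet j (insert (j+1) E) from
        (swapSet_eq_self (by simp [hj])).symm, swapSet_insert, Equiv.swap_apply_right]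
    simp [heckeT, thetaHat, opOf_phi, hj, hj', left_mem_swapSet, right_mem_swapSet,
      hset, c_succ_of_mem hj, c_le_of_mem hj, c_swap (show j ≠ j+1 by omega),
      pow_succ, Finset.mem_insert, smul_smul]
  · -- j ∉ E, j+1 ∈ E
    have hset : insert (j+1) (swapSet j E) = insert j E := by
      rw [show insert j E = swapSet j (insert j E) from
        (swapSet_eq_self (by simp [hj'])).symm, swapSet_insert, Equiv.swap_apply_left]
    have hc1 : ((swapSet j E).filter (· < j+1)).card = (E.filter (· < j)).card + 1 := by
      rw [c_succ_of_mem (left_mem_swapSet.2 hj'), c_swap (show j ≠ j+1 by omega)]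
    simp [LinearMap.comp_apply, LinearMap.add_apply, heckeT, thetaHat, opOf_phi,
      hj, hj', left_mem_swapSet, right_mem_swapSet, hset, hc1, c_le_of_mem (left_mem_swapSet.2 hj'), c_swap (show j ≠ j+1 by omega),
      Finset.mem_insert, pow_succ, hjne, hjne.symm]
    module
  · -- neither
    have hS : swapSet j E = E := swapSet_eq_self (by simp [hj, hj'])
    have hG : swapSet j (insert j E) = insert (j+1) E := by
      rw [swapSet_insert, Equiv.swap_apply_left, hS]
    have hH : swapSet j (insert (j+1) E) = insert j E := by
      rw [swapSet_insert, Equiv.swap_apply_right, hS]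
    simp [LinearMap.comp_apply, LinearMap.add_apply, heckeT, thetaHat, opOf_phi,
      hj, hj', hS, hG, hH, c_succ_of_not_mem hj, c_le_of_not_mem hj, Finset.mem_insert, hjne, hjne.symm]
    module

-- Lemma C: the pair t^{j-1}∂_j + t^j ∂_{j+1}
lemma pair_ferm_comm (t : K) {j : ℕ} (hj1 : 1 ≤ j) :
    (t^(j-1) • fermD K j + t^j • fermD K (j+1)) ∘ₗ heckeT t j
      = heckeT t j ∘ₗ (t^(j-1) • fermD K j + t^j • fermD K (j+1)) := by
  apply ext_phi; intro E
  have hjne : j ≠ j + 1 := by omega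
  have hpow : t ^ j = t ^ (j-1) * t := by rw [← pow_succ]; congr 1; omega
  by_cases hj : j ∈ E <;> by_cases hj' : j + 1 ∈ E
  · -- both
    have hSE : swapSet j E = E := swapSet_eq_self (by simp [hj, hj'])
    have hA : swapSet j (E.erase j) = E.erase (j+1) := by
      rw [swapSet_erase, Equiv.swap_apply_left, hSE]
    have hB : swapSet j (E.erase (j+1)) = E.erase j := by
      rw [swapSet_erase, Equiv.swap_apply_right, hSE]
    simp [LinearMap.comp_apply, heckeT, fermD, opOf_phi, hj, hj', hA, hB,
      c_succ_of_mem hj, c_le_of_mem hj, Finset.mem_erase, hjne, hjne.symm, pow_succ, hpow]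
    module
  · -- j ∈ E, j+1 ∉ E
    have hA : swapSet j (E.erase j) = E.erase j :=
      swapSet_eq_self (by simp [hj', hjne.symm])
    have hSe : (swapSet j E).erase (j+1) = E.erase j := by
      have h := swapSet_erase j j E
      rw [Equiv.swap_apply_left] at h
      rw [← h, hA]
    have hc : ((swapSet j E).filter (· < j+1)).card = (E.filter (· < j)).card := by
      rw [c_succ_of_not_mem (by simp [left_mem_swapSet, hj']),
        c_swap (show j ≠ j+1 by omega)]
    simp [LinearMap.comp_apply, heckeT, fermD, opOf_phi, hj, hj',
      left_mem_swapSet, right_mem_swapSet, hSe, hc, Finset.mem_erase,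
      c_le_of_not_mem (show j ∉ swapSet j E by simp [left_mem_swapSet, hj']), c_swap (show j ≠ j+1 by omega),
      hjne, hjne.symm, hpow]
    module
  · -- j ∉ E, j+1 ∈ E
    have hC : swapSet j (E.erase (j+1)) = E.erase (j+1) :=
      swapSet_eq_self (by simp [hj, hjne])
    have hSe : (swapSet j E).erase j = E.erase (j+1) := by
      have h := swapSet_erase j (j+1) E
      rw [Equiv.swap_apply_right] at h
      rw [← h, hC]
    simp [LinearMap.comp_apply, heckeT, fermD, opOf_phi, hj, hj',
      left_mem_swapSet, right_mem_swapSet, hSe, c_succ_of_not_mem hj, c_le_of_not_mem hj,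
      c_swap (show j ≠ j+1 by omega), Finset.mem_erase, hjne, hjne.symm, hpow]
    module
  · -- neither
    simp [LinearMap.comp_apply, heckeT, fermD, opOf_phi, hj, hj',
      left_mem_swapSet, right_mem_swapSet]

/-- M = Σ θ̂_i and D = Σ t^{i-1}∂_i commute with T_j for 1 ≤ j < N. -/
theorem opM_opD_comm_heckeT (K : Type) [Field K] (t : K) (N j : ℕ)
    (h1 : 1 ≤ j) (h2 : j < N) :
    opM K N ∘ₗ heckeT t j = heckeT t j ∘ₗ opM K N ∧
    opD t N ∘ₗ heckeT t j = heckeT t j ∘ₗ opD t N := by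
  have hjmem : j ∈ Finset.Icc 1 N := by simp; omega
  have hj1mem : j + 1 ∈ (Finset.Icc 1 N).erase j := by
    simp [Finset.mem_erase]; omega
  constructor
  · have hsum : opM K N = (thetaHat K j + thetaHat K (j+1))
        + ∑ i ∈ ((Finset.Icc 1 N).erase j).erase (j+1), thetaHat K i := by
      rw [opM, ← Finset.add_sum_erase _ _ hjmem,
        ← Finset.add_sum_erase _ _ hj1mem, ← add_assoc]
    have hcomm : Commute (opM K N) (heckeT t j : Module.End K (SP K)) := by
      rw [hsum]
      refine Commute.add_left ?_ ?_
      · show _ * _ = _ * _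
        rw [Module.End.mul_eq_comp, Module.End.mul_eq_comp, pair_theta_comm]
      · refine Commute.sum_left _ _ _ fun i hi => ?_
        simp only [Finset.mem_erase] at hi
        show _ * _ = _ * _
        rw [Module.End.mul_eq_comp, Module.End.mul_eq_comp,
          theta_comm t hi.2.1 hi.1]
    rw [← Module.End.mul_eq_comp, ← Module.End.mul_eq_comp]
    exact hcomm
  · have hsum : opD t N = (t^(j-1) • fermD K j + t^j • fermD K (j+1))
        + ∑ i ∈ ((Finset.Icc 1 N).erase j).erase (j+1), t ^ (i-1) • fermD K i := by
      rw [opD, ← Finset.add_sum_erase _ _ hjmem,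
        ← Finset.add_sum_erase _ _ hj1mem, ← add_assoc]
      norm_num
    have hcomm : Commute (opD t N) (heckeT t j : Module.End K (SP K)) := by
      rw [hsum]
      refine Commute.add_left ?_ ?_
      · show _ * _ = _ * _
        rw [Module.End.mul_eq_comp, Module.End.mul_eq_comp, pair_ferm_comm t h1]
      · refine Commute.sum_left _ _ _ fun i hi => ?_
        simp only [Finset.mem_erase] at hi
        refine Commute.smul_left ?_ _
        show _ * _ = _ * _
        rw [Module.End.mul_eq_comp, Module.End.mul_eq_comp,
          ferm_comm t hi.2.1 hi.1]
    rw [← Module.End.mul_eq_comp, ← Module.End.mul_eq_comp]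
    exact hcomm
end
end

section
/- The dimension of P_{m,0} = ker D ∩ P_m equals C(N-1, m), and the dimension of P_{m,1} = ker M ∩ P_m equals C(N-1, m-1). -/
open Finset

noncomputable section

variable {K : Type} [Field K]

/-- P_m = span{φ_E : E ⊆ {1,…,N}, #E = m} -/
def Pm (K : Type) [Field K] (N m : ℕ) : Submodule K (SP K) :=
  Submodule.span K (phi K '' {E | E ⊆ Finset.Icc 1 N ∧ E.card = m})

def sg (K : Type) [Field K] (i : ℕ) (E : Finset ℕ) : K := (-1 : K) ^ (E.filter (· < i)).card

lemma sg_erase_lt {i j : ℕ} {E : Finset ℕ} (h : j ∈ E) (hji : j < i) :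
    sg K i (E.erase j) = -sg K i E := by
  have : E.filter (· < i) = insert j ((E.erase j).filter (· < i)) := by
    rw [Finset.filter_erase]
    rw [Finset.insert_erase (by simp [Finset.mem_filter, h, hji])]
  unfold sg
  rw [this, Finset.card_insert_of_notMem (by simp [Finset.filter_erase]), pow_succ]
  ring

lemma sg_erase_ge {i j : ℕ} {E : Finset ℕ} (hji : ¬ j < i) :
    sg K i (E.erase j) = sg K i E := by
  unfold sg
  rw [Finset.filter_erase, Finset.erase_eq_of_notMem (by simp [hji])]

lemma sg_insert_lt {i j : ℕ} {E : Finset ℕ} (h : j ∉ E) (hji : j < i) :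
    sg K i (insert j E) = -sg K i E := by
  unfold sg
  rw [Finset.filter_insert, if_pos hji,
    Finset.card_insert_of_notMem (by simp [h]), pow_succ]
  ring

lemma sg_insert_ge {i j : ℕ} {E : Finset ℕ} (hji : ¬ j < i) :
    sg K i (insert j E) = sg K i E := by
  unfold sg
  rw [Finset.filter_insert, if_neg hji]



lemma thetaHat_phi (i : ℕ) (E : Finset ℕ) :
    thetaHat K i (phi K E) = if i ∈ E then 0 else sg K i E • phi K (insert i E) := by
  rw [thetaHat, opOf_phi]; rfl

lemma fermD_phi (i : ℕ) (E : Finset ℕ) :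
    fermD K i (phi K E) = if i ∈ E then sg K i E • phi K (E.erase i) else 0 := by
  rw [fermD, opOf_phi]; rfl

lemma sg_mul_sg (i : ℕ) (E F : Finset ℕ) : sg K i E * sg K i E = 1 := by
  unfold sg; rw [← pow_add, ← two_mul, pow_mul]; norm_num

lemma anticomm (i j : ℕ) (E : Finset ℕ) :
    thetaHat K i (fermD K j (phi K E)) + fermD K j (thetaHat K i (phi K E)) =
      if i = j then phi K E else 0 := by
  rcases eq_or_ne i j with rfl | hij
  · rw [if_pos rfl, thetaHat_phi, fermD_phi]
    by_cases h : i ∈ E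
    · rw [if_pos h, if_pos h, map_smul, map_zero, thetaHat_phi,
        if_neg (Finset.notMem_erase i E), smul_smul, add_zero,
        sg_erase_ge (lt_irrefl i), sg_mul_sg i E E, Finset.insert_erase h, one_smul]
    · rw [if_neg h, if_neg h, map_zero, map_smul, fermD_phi,
        if_pos (Finset.mem_insert_self i E), zero_add, smul_smul,
        sg_insert_ge (lt_irrefl i), sg_mul_sg i E E, Finset.erase_insert h, one_smul]
  · rw [if_neg hij, thetaHat_phi, fermD_phi]
    by_cases hja : j ∈ E
    · by_cases hia : i ∈ E
      · rw [if_pos hja, if_pos hia, map_smul, thetaHat_phi,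
          if_pos (Finset.mem_erase.2 ⟨hij, hia⟩), smul_zero, map_zero, add_zero]
      · rw [if_pos hja, if_neg hia, map_smul, map_smul, thetaHat_phi,
          if_neg (by simp [hia, Ne.symm hij]), fermD_phi,
          if_pos (Finset.mem_insert_of_mem hja), smul_smul, smul_smul]
        have hset : (insert i E).erase j = insert i (E.erase j) :=
          Finset.erase_insert_of_ne hij
        rw [hset, ← add_smul]
        rcases lt_or_ge i j with hlt | hle
        · rw [sg_erase_ge (not_lt.2 hlt.le), sg_insert_lt hia hlt]
          ring_nf
          simp
        · have hjlt : j < i := lt_of_le_of_ne hle (Ne.symm hij)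
          rw [sg_erase_lt hja hjlt, sg_insert_ge (not_lt.2 hjlt.le)]
          ring_nf
          simp
    · rw [if_neg hja, map_zero, zero_add]
      by_cases hia : i ∈ E
      · rw [if_pos hia, map_zero]
      · rw [if_neg hia, map_smul, fermD_phi,
          if_neg (by simp [hja, Ne.symm hij] : j ∉ insert i E), smul_zero]

lemma fermD_fermD (i j : ℕ) (E : Finset ℕ) :
    fermD K i (fermD K j (phi K E)) + fermD K j (fermD K i (phi K E)) = 0 := by
  rcases eq_or_ne i j with rfl | hij
  · rw [fermD_phi]
    by_cases h : i ∈ E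
    · rw [if_pos h, map_smul, fermD_phi, if_neg (Finset.notMem_erase i E), smul_zero,
        add_zero]
    · rw [if_neg h, map_zero, add_zero]
  · rw [fermD_phi i E, fermD_phi j E]
    by_cases hja : j ∈ E
    · by_cases hia : i ∈ E
      · rw [if_pos hja, if_pos hia, map_smul, map_smul, fermD_phi,
          if_pos (Finset.mem_erase.2 ⟨hij, hia⟩), fermD_phi,
          if_pos (Finset.mem_erase.2 ⟨Ne.symm hij, hja⟩), smul_smul, smul_smul,
          Finset.erase_right_comm (s := E) (a := j) (b := i), ← add_smul]
        rcases lt_or_ge i j with hlt | hle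
        · rw [sg_erase_ge (K := K) (E := E) (not_lt.2 hlt.le),
            sg_erase_lt (E := E) hia hlt]
          ring_nf; simp
        · have hjlt : j < i := lt_of_le_of_ne hle (Ne.symm hij)
          rw [sg_erase_lt (E := E) hja hjlt, sg_erase_ge (K := K) (E := E) (not_lt.2 hjlt.le)]
          ring_nf; simp
      · rw [if_neg hia, map_zero, add_zero, if_pos hja, map_smul, fermD_phi,
          if_neg (by simp [hia]), smul_zero]
    · rw [if_neg hja, map_zero, zero_add]
      by_cases hia : i ∈ E
      · rw [if_pos hia, map_smul, fermD_phi, if_neg (by simp [hja]), smul_zero]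
      · rw [if_neg hia, map_zero]

lemma thetaHat_thetaHat (i j : ℕ) (E : Finset ℕ) :
    thetaHat K i (thetaHat K j (phi K E)) + thetaHat K j (thetaHat K i (phi K E)) = 0 := by
  rcases eq_or_ne i j with rfl | hij
  · rw [thetaHat_phi]
    by_cases h : i ∈ E
    · rw [if_pos h, map_zero, add_zero]
    · rw [if_neg h, map_smul, thetaHat_phi, if_pos (Finset.mem_insert_self i E), smul_zero,
        add_zero]
  · rw [thetaHat_phi i E, thetaHat_phi j E]
    by_cases hja : j ∈ E
    · rw [if_pos hja, map_zero, zero_add]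
      by_cases hia : i ∈ E
      · rw [if_pos hia, map_zero]
      · rw [if_neg hia, map_smul, thetaHat_phi,
          if_pos (Finset.mem_insert_of_mem hja), smul_zero]
    · by_cases hia : i ∈ E
      · rw [if_pos hia, map_zero, add_zero, if_neg hja, map_smul, thetaHat_phi,
          if_pos (Finset.mem_insert_of_mem hia), smul_zero]
      · rw [if_neg hia, if_neg hja, map_smul, map_smul, thetaHat_phi,
          if_neg (by simp [hia, hij]), thetaHat_phi, if_neg (by simp [hja, Ne.symm hij]),
          smul_smul, smul_smul, Finset.insert_comm, ← add_smul]
        rcases lt_or_ge i j with hlt | hle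
        · rw [sg_insert_ge (K := K) (E := E) (j := j) (not_lt.2 hlt.le),
            sg_insert_lt hia hlt]
          ring_nf; simp
        · have hjlt : j < i := lt_of_le_of_ne hle (Ne.symm hij)
          rw [sg_insert_lt hja hjlt, sg_insert_ge (K := K) (E := E) (not_lt.2 hjlt.le)]
          ring_nf; simp



lemma opD_apply (t : K) (N : ℕ) (x : SP K) :
    opD t N x = ∑ j ∈ Finset.Icc 1 N, t ^ (j - 1) • fermD K j x := by
  simp [opD, LinearMap.sum_apply]

lemma opM_apply (N : ℕ) (x : SP K) :
    opM K N x = ∑ j ∈ Finset.Icc 1 N, thetaHat K j x := by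
  simp [opM, LinearMap.sum_apply]

lemma opD_opD_phi (t : K) (N : ℕ) (E : Finset ℕ) :
    opD t N (opD t N (phi K E)) = 0 := by
  simp only [opD_apply, map_sum, map_smul, Finset.smul_sum, smul_smul]
  rw [← Finset.sum_product']
  apply Finset.sum_involution (fun p _ => p.swap)
  · intro p hp
    simp only [Prod.fst_swap, Prod.snd_swap]
    rw [mul_comm (t ^ (p.2 - 1))]
    rw [← smul_add, fermD_fermD, smul_zero]
  · intro p hp h
    intro hc
    apply h
    have h21 : p.2 = p.1 := by
      have := congrArg Prod.fst hc; simpa using this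
    rw [h21]
    rw [(by rw [fermD_phi]; split <;> [rw [map_smul, fermD_phi, if_neg (Finset.notMem_erase _ _), smul_zero]; rw [map_zero]] :
      fermD K p.1 (fermD K p.1 (phi K E)) = 0), smul_zero]
  · intro p _
    simp
  all_goals
    intro p hp
    simp only [Finset.mem_product] at hp ⊢
    exact ⟨hp.2, hp.1⟩

lemma opM_opM_phi (N : ℕ) (E : Finset ℕ) :
    opM K N (opM K N (phi K E)) = 0 := by
  simp only [opM_apply, map_sum]
  rw [← Finset.sum_product']
  apply Finset.sum_involution (fun p _ => p.swap)
  · intro p hp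
    simp only [Prod.fst_swap, Prod.snd_swap]
    rw [thetaHat_thetaHat]
  · intro p hp h hc
    apply h
    have h21 : p.2 = p.1 := by
      have := congrArg Prod.fst hc; simpa using this
    rw [h21]
    rw [thetaHat_phi]
    split
    · rw [map_zero]
    · rw [map_smul, thetaHat_phi, if_pos (Finset.mem_insert_self _ _), smul_zero]
  · intro p _
    simp
  all_goals
    intro p hp
    simp only [Finset.mem_product] at hp ⊢
    exact ⟨hp.2, hp.1⟩

lemma opMD_DM_phi (t : K) (N : ℕ) (E : Finset ℕ) :
    opM K N (opD t N (phi K E)) + opD t N (opM K N (phi K E)) =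
      (∑ i ∈ Finset.range N, t ^ i) • phi K E := by
  simp only [opD_apply, opM_apply, map_sum, map_smul, Finset.smul_sum]
  rw [Finset.sum_comm (s := Finset.Icc 1 N) (t := Finset.Icc 1 N)
    (f := fun j i => t ^ (j-1) • thetaHat K i (fermD K j (phi K E)))]
  rw [← Finset.sum_add_distrib]
  have : ∀ i ∈ Finset.Icc 1 N,
      (∑ j ∈ Finset.Icc 1 N, t ^ (j-1) • thetaHat K i (fermD K j (phi K E))) +
      (∑ j ∈ Finset.Icc 1 N, t ^ (j-1) • fermD K j (thetaHat K i (phi K E))) =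
      t ^ (i-1) • phi K E := by
    intro i hi
    rw [← Finset.sum_add_distrib]
    rw [Finset.sum_eq_single i]
    · rw [← smul_add, anticomm, if_pos rfl]
    · intro j hj hji
      rw [← smul_add, anticomm, if_neg (Ne.symm hji), smul_zero]
    · intro h; exact absurd hi h
  rw [Finset.sum_congr rfl this, ← Finset.sum_smul]
  congr 1
  rw [Finset.sum_bij (fun (i : ℕ) _ => i - 1)]
  · intro a ha
    simp only [Finset.mem_Icc] at ha
    simp only [Finset.mem_range]
    omega
  · intro a ha b hb hab
    simp only [Finset.mem_Icc] at ha hb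
    omega
  · intro b hb
    simp only [Finset.mem_range] at hb
    exact ⟨b + 1, by simp [Finset.mem_Icc]; omega, by omega⟩
  · intro a _; rfl


lemma phi_injective : Function.Injective (phi K) :=
  Finsupp.single_left_injective one_ne_zero

lemma phi_linearIndependent : LinearIndependent K (phi K) := by
  have : (phi K : Finset ℕ → SP K) = ⇑(Finsupp.basisSingleOne (R := K) (ι := Finset ℕ)) := by
    funext E; rw [Finsupp.coe_basisSingleOne]; rfl
  rw [this]
  exact Finsupp.basisSingleOne.linearIndependent

lemma Pm_set_eq (N m : ℕ) :
    {E : Finset ℕ | E ⊆ Finset.Icc 1 N ∧ E.card = m} = ↑((Finset.Icc 1 N).powersetCard m) := by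
  ext E; simp [Finset.mem_powersetCard]

instance Pm_fd (N m : ℕ) : FiniteDimensional K (Pm K N m) := by
  apply FiniteDimensional.span_of_finite
  exact Set.Finite.image _ (by rw [Pm_set_eq]; exact Finset.finite_toSet _)

lemma finrank_Pm (N m : ℕ) : Module.finrank K (Pm K N m) = N.choose m := by
  classical
  rw [Pm, Pm_set_eq]
  have hli : LinearIndependent K
      (Subtype.val : ↑(phi K '' ↑((Finset.Icc 1 N).powersetCard m)) → SP K) := by
    exact LinearIndepOn.id_image (v := phi K) (s := ↑((Finset.Icc 1 N).powersetCard m))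
      ((phi_linearIndependent (K := K)).comp _ Subtype.val_injective)
  haveI hfin : Fintype ↑(phi K '' ↑((Finset.Icc 1 N).powersetCard m)) :=
    Set.Finite.fintype (Set.Finite.image _ (Finset.finite_toSet _))
  rw [finrank_span_set_eq_card hli]
  rw [Set.toFinset_image]
  rw [Finset.card_image_of_injective _ (phi_injective)]
  simp [Finset.card_powersetCard, Nat.card_Icc]

lemma phi_mem_Pm {N m : ℕ} {E : Finset ℕ} (h1 : E ⊆ Finset.Icc 1 N) (h2 : E.card = m) :
    phi K E ∈ Pm K N m :=
  Submodule.subset_span ⟨E, ⟨h1, h2⟩, rfl⟩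

lemma opD_mem {t : K} {N m : ℕ} {x : SP K} (hx : x ∈ Pm K N m) :
    opD t N x ∈ Pm K N (m - 1) := by
  induction hx using Submodule.span_induction with
  | mem y hy =>
    obtain ⟨E, ⟨hE1, hE2⟩, rfl⟩ := hy
    rw [opD_apply]
    apply Submodule.sum_mem
    intro j hj
    apply Submodule.smul_mem
    rw [fermD_phi]
    split
    · apply Submodule.smul_mem
      apply phi_mem_Pm ((Finset.erase_subset j E).trans hE1)
      rw [Finset.card_erase_of_mem ‹j ∈ E›, hE2]
    · exact Submodule.zero_mem _
  | zero => rw [map_zero]; exact Submodule.zero_mem _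
  | add y z _ _ hy hz => rw [map_add]; exact Submodule.add_mem _ hy hz
  | smul a y _ hy => rw [map_smul]; exact Submodule.smul_mem _ a hy

lemma opM_mem {N m : ℕ} {x : SP K} (hx : x ∈ Pm K N m) :
    opM K N x ∈ Pm K N (m + 1) := by
  induction hx using Submodule.span_induction with
  | mem y hy =>
    obtain ⟨E, ⟨hE1, hE2⟩, rfl⟩ := hy
    rw [opM_apply]
    apply Submodule.sum_mem
    intro j hj
    rw [thetaHat_phi]
    split
    · exact Submodule.zero_mem _
    · apply Submodule.smul_mem
      apply phi_mem_Pm (Finset.insert_subset hj hE1)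
      rw [Finset.card_insert_of_notMem ‹j ∉ E›, hE2]
  | zero => rw [map_zero]; exact Submodule.zero_mem _
  | add y z _ _ hy hz => rw [map_add]; exact Submodule.add_mem _ hy hz
  | smul a y _ hy => rw [map_smul]; exact Submodule.smul_mem _ a hy

lemma single_eq_smul_phi (E : Finset ℕ) (b : K) :
    (Finsupp.single E b : SP K) = b • phi K E := by
  simp [phi, Finsupp.smul_single]

lemma opD_opD (t : K) (N : ℕ) (x : SP K) : opD t N (opD t N x) = 0 := by
  have : (opD t N) ∘ₗ (opD t N) = 0 := by
    apply Finsupp.lhom_ext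
    intro E b
    rw [LinearMap.comp_apply, single_eq_smul_phi, map_smul, map_smul, opD_opD_phi,
      smul_zero, LinearMap.zero_apply]
  calc opD t N (opD t N x) = ((opD t N) ∘ₗ (opD t N)) x := rfl
    _ = 0 := by rw [this]; rfl

lemma opM_opM (N : ℕ) (x : SP K) : opM K N (opM K N x) = 0 := by
  have : (opM K N) ∘ₗ (opM K N) = 0 := by
    apply Finsupp.lhom_ext
    intro E b
    rw [LinearMap.comp_apply, single_eq_smul_phi, map_smul, map_smul, opM_opM_phi,
      smul_zero, LinearMap.zero_apply]
  calc opM K N (opM K N x) = ((opM K N) ∘ₗ (opM K N)) x := rfl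
    _ = 0 := by rw [this]; rfl

lemma opMD_DM (t : K) (N : ℕ) (x : SP K) :
    opM K N (opD t N x) + opD t N (opM K N x) = (∑ i ∈ Finset.range N, t ^ i) • x := by
  have : (opM K N) ∘ₗ (opD t N) + (opD t N) ∘ₗ (opM K N) =
      (∑ i ∈ Finset.range N, t ^ i) • LinearMap.id := by
    apply Finsupp.lhom_ext
    intro E b
    simp only [LinearMap.add_apply, LinearMap.comp_apply, LinearMap.smul_apply,
      LinearMap.id_apply]
    rw [single_eq_smul_phi, map_smul, map_smul, map_smul, map_smul, ← smul_add,
      opMD_DM_phi, smul_comm]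
  have h2 := congrArg (fun f => f x) this
  simpa using h2

variable {t : K} {N : ℕ}

lemma kerDM (hgen : (∑ i ∈ Finset.range N, t ^ i) ≠ 0) {x : SP K}
    (hD : opD t N x = 0) (hM : opM K N x = 0) : x = 0 := by
  have h := opMD_DM t N x
  rw [hD, hM, map_zero, map_zero, add_zero] at h
  exact (smul_eq_zero.1 h.symm).resolve_left hgen

lemma claim1 (hgen : (∑ i ∈ Finset.range N, t ^ i) ≠ 0) (m : ℕ) (hm : 1 ≤ m) :
    Module.finrank K ↥(Pm K N m ⊓ LinearMap.ker (opD t N)) +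
      Module.finrank K ↥(Pm K N m ⊓ LinearMap.ker (opM K N)) = N.choose m := by
  set c := ∑ i ∈ Finset.range N, t ^ i with hc
  set A := Pm K N m ⊓ LinearMap.ker (opD t N) with hA
  set B := Pm K N m ⊓ LinearMap.ker (opM K N) with hB
  haveI : FiniteDimensional K A := Submodule.finiteDimensional_of_le inf_le_left
  haveI : FiniteDimensional K B := Submodule.finiteDimensional_of_le inf_le_left
  have hsup : A ⊔ B = Pm K N m := by
    apply le_antisymm (sup_le inf_le_left inf_le_left)
    intro x hx
    have hid := opMD_DM t N x
    have mem1 : c⁻¹ • opD t N (opM K N x) ∈ A := by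
      refine Submodule.mem_inf.2 ⟨?_, ?_⟩
      · apply Submodule.smul_mem
        have h1 : opM K N x ∈ Pm K N (m + 1) := opM_mem hx
        have h2 : opD t N (opM K N x) ∈ Pm K N (m + 1 - 1) := opD_mem h1
        simpa using h2
      · rw [LinearMap.mem_ker, map_smul, opD_opD, smul_zero]
    have mem2 : c⁻¹ • opM K N (opD t N x) ∈ B := by
      refine Submodule.mem_inf.2 ⟨?_, ?_⟩
      · apply Submodule.smul_mem
        have h1 : opD t N x ∈ Pm K N (m - 1) := opD_mem hx
        have h2 : opM K N (opD t N x) ∈ Pm K N (m - 1 + 1) := opM_mem h1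
        rwa [Nat.sub_add_cancel hm] at h2
      · rw [LinearMap.mem_ker, map_smul, opM_opM, smul_zero]
    have hxeq : x = c⁻¹ • opM K N (opD t N x) + c⁻¹ • opD t N (opM K N x) := by
      rw [← smul_add, hid, smul_smul, inv_mul_cancel₀ hgen, one_smul]
    rw [hxeq]
    exact Submodule.add_mem _ (Submodule.mem_sup_right mem2) (Submodule.mem_sup_left mem1)
  have hinf : A ⊓ B = ⊥ := by
    apply eq_bot_iff.2
    intro x hx
    simp only [hA, hB, Submodule.mem_inf, LinearMap.mem_ker] at hx
    simp [kerDM hgen hx.1.2 hx.2.2]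
  have := Submodule.finrank_sup_add_finrank_inf_eq A B
  rw [hsup, hinf, finrank_bot, add_zero, finrank_Pm] at this
  omega

set_option maxHeartbeats 1000000 in
set_option synthInstance.maxHeartbeats 200000 in
lemma claim2 (hgen : (∑ i ∈ Finset.range N, t ^ i) ≠ 0) (k : ℕ) :
    Module.finrank K ↥(Pm K N (k + 1) ⊓ LinearMap.ker (opM K N)) =
      Module.finrank K ↥(Pm K N k ⊓ LinearMap.ker (opD t N)) := by
  set c := ∑ i ∈ Finset.range N, t ^ i with hc
  have hres : ∀ x ∈ Pm K N k ⊓ LinearMap.ker (opD t N),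
      opM K N x ∈ Pm K N (k + 1) ⊓ LinearMap.ker (opM K N) := by
    intro x hx
    refine Submodule.mem_inf.2 ⟨opM_mem (Submodule.mem_inf.1 hx).1, LinearMap.mem_ker.2 (opM_opM N x)⟩
  set f := (opM K N).restrict hres with hf
  have hinj : Function.Injective f := by
    intro a b hab
    have h := congrArg Subtype.val hab
    simp only [hf, LinearMap.restrict_apply] at h
    have h0 : opM K N ((a : SP K) - b) = 0 := by rw [map_sub, h, sub_self]
    have hD : opD t N ((a : SP K) - b) = 0 := by
      rw [map_sub, LinearMap.mem_ker.1 (Submodule.mem_inf.1 a.2).2,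
        LinearMap.mem_ker.1 (Submodule.mem_inf.1 b.2).2, sub_self]
    have := kerDM hgen hD h0
    exact Subtype.ext (by rwa [sub_eq_zero] at this)
  have hsurj : Function.Surjective f := by
    rintro ⟨y, hy⟩
    have hyP : y ∈ Pm K N (k + 1) := hy.1
    have hyM : opM K N y = 0 := LinearMap.mem_ker.1 hy.2
    have hzmem : c⁻¹ • opD t N y ∈ Pm K N k ⊓ LinearMap.ker (opD t N) := by
      refine Submodule.mem_inf.2 ⟨?_, ?_⟩
      · apply Submodule.smul_mem
        have := opD_mem (t := t) hyP
        simpa using this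
      · rw [LinearMap.mem_ker, map_smul, opD_opD, smul_zero]
    refine ⟨⟨c⁻¹ • opD t N y, hzmem⟩, ?_⟩
    apply Subtype.ext
    have : opM K N (c⁻¹ • opD t N y) = y := by
      rw [map_smul]
      have hid := opMD_DM t N y
      rw [hyM, map_zero, add_zero] at hid
      rw [hid, smul_smul, inv_mul_cancel₀ hgen, one_smul]
    simpa [hf, LinearMap.restrict_apply] using this
  exact (LinearEquiv.ofBijective f ⟨hinj, hsurj⟩).finrank_eq.symm

lemma claim3 : Module.finrank K ↥(Pm K N 0 ⊓ LinearMap.ker (opD t N)) = 1 := by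
  have hle : Pm K N 0 ≤ LinearMap.ker (opD t N) := by
    rw [Pm, Submodule.span_le]
    rintro _ ⟨E, ⟨hE1, hE2⟩, rfl⟩
    rw [Finset.card_eq_zero] at hE2
    subst hE2
    rw [SetLike.mem_coe, LinearMap.mem_ker, opD_apply]
    apply Finset.sum_eq_zero
    intro j hj
    rw [fermD_phi, if_neg (Finset.notMem_empty j), smul_zero]
  rw [inf_eq_left.2 hle, finrank_Pm, Nat.choose_zero_right]

lemma finrank_A (hgen : (∑ i ∈ Finset.range N, t ^ i) ≠ 0) (m : ℕ) (hmN : m ≤ N) :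
    Module.finrank K ↥(Pm K N m ⊓ LinearMap.ker (opD t N)) = (N - 1).choose m := by
  induction m with
  | zero => rw [claim3, Nat.choose_zero_right]
  | succ k ih =>
    have hk := ih (le_of_lt hmN)
    have h1 := claim1 hgen (k + 1) (Nat.le_add_left 1 k)
    have h2 := claim2 (t := t) hgen k
    have hpascal : N.choose (k + 1) = (N - 1).choose k + (N - 1).choose (k + 1) := by
      have hN : N = (N - 1) + 1 := by omega
      rw [hN, Nat.choose_succ_succ]
      congr 1 <;> omega
    omega

theorem PmDimsAux (K : Type) [Field K] (t : K) (ht : t ≠ 0) (N m : ℕ)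
    (hm1 : 1 ≤ m) (hmN : m ≤ N)
    (hgen : (∑ i ∈ Finset.range N, t ^ i) ≠ 0) :
    Module.finrank K ↥(Pm K N m ⊓ LinearMap.ker (opD t N)) = (N - 1).choose m ∧
    Module.finrank K ↥(Pm K N m ⊓ LinearMap.ker (opM K N)) = (N - 1).choose (m - 1) := by
  refine ⟨finrank_A hgen m hmN, ?_⟩
  obtain ⟨k, rfl⟩ : ∃ k, m = k + 1 := ⟨m - 1, by omega⟩
  rw [claim2 (t := t) hgen k, finrank_A hgen k (by omega)]
  congr 1

/-- dim P_{m,0} = C(N-1, m) and dim P_{m,1} = C(N-1, m-1). -/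
theorem Pm_dims (K : Type) [Field K] (t : K) (ht : t ≠ 0) (N m : ℕ)
    (hm1 : 1 ≤ m) (hmN : m ≤ N)
    (hgen : (∑ i ∈ Finset.range N, t ^ i) ≠ 0) :
    Module.finrank K ↥(Pm K N m ⊓ LinearMap.ker (opD t N)) = (N - 1).choose m ∧
    Module.finrank K ↥(Pm K N m ⊓ LinearMap.ker (opM K N)) = (N - 1).choose (m - 1) := by
  exact PmDimsAux K t ht N m hm1 hmN hgen
end
end
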